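/- For 0 < η < 1/2, the function η ↦ (1+η) − γ(η) with γ(η) = ln(1−η)/ln(1−η−η²) is strictly increasing in η on (0, 1/2). -/

import Mathlib

open Real Set

/-- Auxiliary inequality: for `0 < x ≤ 1`, `x * log x ≥ (x-1) + (x-1)^2/2`. -/
lemma aux_xlogx (x : ℝ) (hx0 : 0 < x) (hx1 : x ≤ 1) :
    (x - 1) + (x - 1) ^ 2 / 2 ≤ x * Real.log x := by
  set φ : ℝ → ℝ := fun y => y * Real.log y - ((y - 1) + (y - 1) ^ 2 / 2) with hφ
  have hHD : ∀ y : ℝ, 0 < y →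
      HasDerivAt φ ((1 * Real.log y + y * y⁻¹) - (1 + (2 * (y - 1) ^ 1 * 1) / 2)) y := by
    intro y hy0
    have h1 : HasDerivAt (fun y : ℝ => y * Real.log y) (1 * Real.log y + y * y⁻¹) y :=
      (hasDerivAt_id y).mul (Real.hasDerivAt_log hy0.ne')
    have h2 : HasDerivAt (fun y : ℝ => (y - 1) + (y - 1) ^ 2 / 2)
        (1 + (2 * (y - 1) ^ 1 * 1) / 2) y :=
      ((hasDerivAt_id y).sub_const 1).add
        ((((hasDerivAt_id y).sub_const 1).pow 2).div_const 2)
    exact h1.sub h2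
  have hdiff : DifferentiableOn ℝ φ (interior (Icc x 1)) := by
    intro y hy
    rw [interior_Icc] at hy
    exact (hHD y (lt_trans hx0 hy.1)).differentiableAt.differentiableWithinAt
  have hderiv : ∀ y ∈ interior (Icc x 1), deriv φ y ≤ 0 := by
    intro y hy
    rw [interior_Icc] at hy
    have hy0 : 0 < y := lt_trans hx0 hy.1
    rw [(hHD y hy0).deriv]
    have hlog : Real.log y ≤ y - 1 := Real.log_le_sub_one_of_pos hy0
    have : y * y⁻¹ = 1 := mul_inv_cancel₀ hy0.ne'
    rw [this]
    ring_nf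
    nlinarith [hlog]
  have hcont : ContinuousOn φ (Icc x 1) := by
    apply ContinuousOn.sub
    · exact continuousOn_id.mul (Real.continuousOn_log.mono (by
        intro y hy
        simp only [mem_compl_iff, mem_singleton_iff]
        exact (lt_of_lt_of_le hx0 hy.1).ne'))
    · fun_prop
  have hanti : AntitoneOn φ (Icc x 1) :=
    antitoneOn_of_deriv_nonpos (convex_Icc x 1) hcont hdiff hderiv
  have hx : x ∈ Icc x 1 := ⟨le_refl x, hx1⟩
  have h1 : (1 : ℝ) ∈ Icc x 1 := ⟨hx1, le_refl 1⟩
  have := hanti hx h1 hx1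
  simp only [hφ, Real.log_one, mul_zero] at this
  nlinarith [this]

/-- γ(η) is strictly decreasing on (0, 1/2). -/
lemma gamma_strict_anti :
    StrictAntiOn (fun η : ℝ => Real.log (1 - η) / Real.log (1 - η - η ^ 2))
      (Set.Ioo 0 (1/2)) := by
  -- basic facts valid for η ∈ (0, 1/2)
  have key : ∀ η : ℝ, η ∈ Set.Ioo (0:ℝ) (1/2) →
      HasDerivAt (fun η : ℝ => Real.log (1 - η) / Real.log (1 - η - η ^ 2))
        (((-1) / (1 - η) * Real.log (1 - η - η ^ 2) -
          Real.log (1 - η) * ((-1 - 2 * η) / (1 - η - η ^ 2))) /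
          Real.log (1 - η - η ^ 2) ^ 2) η ∧
      ((-1) / (1 - η) * Real.log (1 - η - η ^ 2) -
          Real.log (1 - η) * ((-1 - 2 * η) / (1 - η - η ^ 2))) /
          Real.log (1 - η - η ^ 2) ^ 2 < 0 := by
    intro η hη
    obtain ⟨hη0, hη2⟩ := hη
    have ha0 : (0:ℝ) < 1 - η := by linarith
    have ha1 : 1 - η < 1 := by linarith
    have hb0 : (0:ℝ) < 1 - η - η ^ 2 := by nlinarith
    have hb1 : 1 - η - η ^ 2 < 1 := by nlinarith
    have hlogb_neg : Real.log (1 - η - η ^ 2) < 0 := Real.log_neg hb0 hb1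
    have hlogb_ne : Real.log (1 - η - η ^ 2) ≠ 0 := ne_of_lt hlogb_neg
    -- derivative of numerator
    have hA : HasDerivAt (fun η : ℝ => 1 - η) (-1) η := by
      simpa using (hasDerivAt_id η).const_sub 1
    have hlogA : HasDerivAt (fun η : ℝ => Real.log (1 - η)) ((-1) / (1 - η)) η :=
      hA.log ha0.ne'
    -- derivative of denominator-inside
    have hB : HasDerivAt (fun η : ℝ => 1 - η - η ^ 2) (-1 - 2 * η) η := by
      have := (((hasDerivAt_id η).const_sub 1).sub (hasDerivAt_pow 2 η))
      exact this.congr_deriv (by norm_num)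
    have hlogB : HasDerivAt (fun η : ℝ => Real.log (1 - η - η ^ 2))
        ((-1 - 2 * η) / (1 - η - η ^ 2)) η := hB.log hb0.ne'
    have hd := hlogA.div hlogB hlogb_ne
    refine ⟨hd, ?_⟩
    -- now show the derivative value is negative
    have hsq : 0 < Real.log (1 - η - η ^ 2) ^ 2 :=
      lt_of_le_of_ne (sq_nonneg _) (Ne.symm (pow_ne_zero 2 hlogb_ne))
    apply div_neg_of_neg_of_pos _ hsq
    -- numerator N = h / ((1-η) * (1-η-η²)) where h < 0
    have hN : (-1) / (1 - η) * Real.log (1 - η - η ^ 2) -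
        Real.log (1 - η) * ((-1 - 2 * η) / (1 - η - η ^ 2)) =
        ((1 + 2 * η) * (1 - η) * Real.log (1 - η) -
          (1 - η - η ^ 2) * Real.log (1 - η - η ^ 2)) / ((1 - η) * (1 - η - η ^ 2)) := by
      field_simp
      ring
    rw [hN]
    apply div_neg_of_neg_of_pos _ (mul_pos ha0 hb0)
    -- key inequality
    have l1 : Real.log (1 - η) ≤ -η := by
      have := Real.log_le_sub_one_of_pos ha0
      linarith
    have l2 : ((1 - η - η ^ 2) - 1) + ((1 - η - η ^ 2) - 1) ^ 2 / 2 ≤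
        (1 - η - η ^ 2) * Real.log (1 - η - η ^ 2) := aux_xlogx _ hb0 hb1.le
    have hc : (0:ℝ) ≤ (1 + 2 * η) * (1 - η) := by nlinarith
    nlinarith [mul_le_mul_of_nonneg_left l1 hc, l2, sq_nonneg (η * (1 - η)),
      mul_pos hη0 (mul_pos hη0 (mul_pos ha0 ha0))]
  apply strictAntiOn_of_deriv_neg (convex_Ioo 0 (1/2))
  · intro η hη
    exact ((key η hη).1).continuousAt.continuousWithinAt
  · intro η hη
    rw [interior_Ioo] at hη
    rw [((key η hη).1).deriv]
    exact (key η hη).2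

theorem gap_strict_mono :
    StrictMonoOn (fun η : ℝ => (1 + η) - Real.log (1 - η) / Real.log (1 - η - η ^ 2))
      (Set.Ioo 0 (1/2)) := by
  intro x hx y hy hxy
  have h := gamma_strict_anti hx hy hxy
  simp only [] at h ⊢
  linarith
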